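/- The function G(p) = V(p) − ln(p/(p−1)) is strictly increasing on (1,∞), where V(p) = p·ln(p²/(p²−1)). -/

import Mathlib

open Real Set

noncomputable def V (p : ℝ) : ℝ := p * Real.log (p ^ 2 / (p ^ 2 - 1))

noncomputable def G (p : ℝ) : ℝ := V p - Real.log (p / (p - 1))

theorem stmt_5 : StrictMonoOn G (Set.Ioi (1 : ℝ)) := by
  have key : ∀ p ∈ Set.Ioi (1:ℝ),
      HasDerivAt G (Real.log (p^2/(p^2-1)) - 1/(p*(p+1))) p := by
    intro p hp
    simp only [Set.mem_Ioi] at hp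
    have hp0 : (0:ℝ) < p := lt_trans one_pos hp
    have hpm : (0:ℝ) < p - 1 := by linarith
    have hs : (0:ℝ) < p^2 - 1 := by nlinarith
    -- derivative of V
    have hnum : HasDerivAt (fun x : ℝ => x^2) (2*p) p := by
      simpa using hasDerivAt_pow 2 p
    have hden : HasDerivAt (fun x : ℝ => x^2 - 1) (2*p) p := hnum.sub_const 1
    have hu : HasDerivAt (fun x : ℝ => x^2 / (x^2 - 1))
        ((2*p*(p^2-1) - p^2*(2*p)) / (p^2-1)^2) p :=
      hnum.div hden (ne_of_gt hs)
    have hupos : (0:ℝ) < p^2 / (p^2-1) := by positivity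
    have hlogu : HasDerivAt (fun x : ℝ => Real.log (x^2 / (x^2 - 1)))
        (((2*p*(p^2-1) - p^2*(2*p)) / (p^2-1)^2) / (p^2/(p^2-1))) p :=
      hu.log (ne_of_gt hupos)
    have hV : HasDerivAt V
        (1 * Real.log (p^2/(p^2-1)) +
          p * (((2*p*(p^2-1) - p^2*(2*p)) / (p^2-1)^2) / (p^2/(p^2-1)))) p :=
      (hasDerivAt_id p).mul hlogu
    -- derivative of log(p/(p-1))
    have hw : HasDerivAt (fun x : ℝ => x / (x - 1))
        ((1*(p-1) - p*1) / (p-1)^2) p :=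
      (hasDerivAt_id p).div ((hasDerivAt_id p).sub_const 1) (ne_of_gt hpm)
    have hwpos : (0:ℝ) < p / (p-1) := by positivity
    have hlogw : HasDerivAt (fun x : ℝ => Real.log (x / (x - 1)))
        (((1*(p-1) - p*1) / (p-1)^2) / (p/(p-1))) p :=
      hw.log (ne_of_gt hwpos)
    have hG := hV.sub hlogw
    refine HasDerivAt.congr_deriv hG ?_
    have h1 : p ≠ 0 := ne_of_gt hp0
    have h2 : p - 1 ≠ 0 := ne_of_gt hpm
    have h3 : p^2 - 1 ≠ 0 := ne_of_gt hs
    have h4 : p + 1 ≠ 0 := by positivity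
    field_simp
    ring
  have hcont : ContinuousOn G (Set.Ioi 1) :=
    fun p hp => (key p hp).continuousAt.continuousWithinAt
  apply strictMonoOn_of_deriv_pos (convex_Ioi 1) hcont
  intro p hp
  rw [interior_Ioi] at hp
  rw [(key p hp).deriv]
  simp only [Set.mem_Ioi] at hp
  have hp0 : (0:ℝ) < p := lt_trans one_pos hp
  have hs : (0:ℝ) < p^2 - 1 := by nlinarith
  have hlt : Real.log ((p^2-1)/p^2) < (p^2-1)/p^2 - 1 := by
    apply Real.log_lt_sub_one_of_pos (by positivity)
    intro h
    rw [div_eq_one_iff_eq (by positivity : (p:ℝ)^2 ≠ 0)] at h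
    linarith
  have e1 : Real.log ((p^2-1)/p^2) = Real.log (p^2-1) - Real.log (p^2) :=
    Real.log_div (ne_of_gt hs) (by positivity)
  have e2 : Real.log (p^2/(p^2-1)) = Real.log (p^2) - Real.log (p^2-1) :=
    Real.log_div (by positivity) (ne_of_gt hs)
  have e3 : (p^2-1)/p^2 - 1 = -(1/p^2) := by field_simp; ring
  have hfrac : 1/(p*(p+1)) < 1/p^2 := by
    apply one_div_lt_one_div_of_lt (by positivity)
    nlinarith
  rw [e2]
  rw [e1, e3] at hlt
  linarith
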